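/- arXiv:1802.10064 — 2 statements merged into one kernel-verified Lean document; each statement's English description precedes it below -/
import Mathlib

section
/- Let O be a discrete valuation ring with uniformizer ϖ and fraction field F, let n ≥ 1, and let K be a subgroup of GL_{2n}(O) (viewed inside GL_{2n}(F)) containing every matrix [[1_n, X],[0, 1_n]] with X ∈ M_n(O). Fix an integer β ≥ 0 and set t := ι(ϖ·1_n, 1_n) ∈ GL_{2n}(F). Then for all h₁, h₂ ∈ GL_n(O): ι(h₁,h₂) ∈ K ∩ ξ t^β K t^{-β} ξ^{-1} if and only if ι(h₁,h₂) ∈ K ∩ ι(1_n,w_n)·K·ι(1_n,w_n) and h₁ − h₂ ∈ ϖ^β M_n(O) (equivalently, h₁h₂^{-1} ∈ 1_n + ϖ^β M_n(O)). -/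
open Matrix

/-- The `n × n` antidiagonal permutation matrix `w_n`, with `(i,j)` entry `δ_{i, n+1-j}`. -/
def wMat (n : ℕ) (R : Type*) [CommRing R] : Matrix (Fin n) (Fin n) R :=
  fun i j => if (i : ℕ) + (j : ℕ) + 1 = n then 1 else 0

/-- The block diagonal matrix `ι(A, D) = [[A, 0], [0, D]]`. -/
def iotaBlk {n : ℕ} {R : Type*} [CommRing R] (A D : Matrix (Fin n) (Fin n) R) :
    Matrix (Fin n ⊕ Fin n) (Fin n ⊕ Fin n) R :=
  Matrix.fromBlocks A 0 0 D

/-- The matrix `ξ = [[1_n, w_n], [0_n, w_n]]`. -/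
def xiMat (n : ℕ) (R : Type*) [CommRing R] : Matrix (Fin n ⊕ Fin n) (Fin n ⊕ Fin n) R :=
  Matrix.fromBlocks 1 (wMat n R) 0 (wMat n R)

/-- The matrix `ξ⁻¹ = [[1_n, -1_n], [0_n, w_n]]`. -/
def xiInvMat (n : ℕ) (R : Type*) [CommRing R] : Matrix (Fin n ⊕ Fin n) (Fin n ⊕ Fin n) R :=
  Matrix.fromBlocks 1 (-1) 0 (wMat n R)

/-- The matrix `t(a) = ι(a·1_n, 1_n)`. -/
def tMat (n : ℕ) (R : Type*) [CommRing R] (a : R) :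
    Matrix (Fin n ⊕ Fin n) (Fin n ⊕ Fin n) R :=
  iotaBlk (a • (1 : Matrix (Fin n) (Fin n) R)) 1

lemma wMat_apply {n : ℕ} {R : Type*} [CommRing R] (i j : Fin n) :
    wMat n R i j = if j = i.rev then 1 else 0 := by
  have hi := i.isLt; have hj := j.isLt
  have h : ((i:ℕ) + j + 1 = n) ↔ j = i.rev := by
    rw [Fin.ext_iff, Fin.val_rev]; omega
  simp [wMat, h]

lemma w_mul_w {n : ℕ} {R : Type*} [CommRing R] : wMat n R * wMat n R = 1 := by
  ext i j
  rw [Matrix.mul_apply, Finset.sum_eq_single i.rev]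
  · simp [wMat_apply, Matrix.one_apply, Fin.rev_rev, eq_comm]
  · intro b _ hb; simp [wMat_apply, hb]
  · simp

lemma mul_w_apply {n : ℕ} {R : Type*} [CommRing R] (A : Matrix (Fin n) (Fin n) R) (i j : Fin n) :
    (A * wMat n R) i j = A i j.rev := by
  rw [Matrix.mul_apply, Finset.sum_eq_single j.rev]
  · simp [wMat_apply, Fin.rev_rev]
  · intro b _ hb
    have : ¬ (j = b.rev) := fun h => hb (by rw [h, Fin.rev_rev])
    simp [wMat_apply, this]
  · simp

lemma wMat_map {n : ℕ} {R S : Type*} [CommRing R] [CommRing S] (f : R →+* S) :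
    (wMat n R).map f = wMat n S := by
  ext i j; simp [wMat, Matrix.map_apply, apply_ite f]

lemma tMat_pow {n : ℕ} {R : Type*} [CommRing R] (a : R) (β : ℕ) :
    tMat n R a ^ β = Matrix.fromBlocks ((a ^ β) • 1) 0 0 1 := by
  induction β with
  | zero => simp [← Matrix.fromBlocks_one]
  | succ k ih =>
    rw [pow_succ, ih, tMat, iotaBlk, Matrix.fromBlocks_multiply]
    simp [pow_succ, smul_smul, Matrix.smul_mul, Matrix.mul_smul, mul_comm]

lemma tMat_inv {n : ℕ} (F : Type*) [Field F] (a : F) (ha : a ≠ 0) :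
    (tMat n F a)⁻¹ = tMat n F a⁻¹ := by
  apply Matrix.inv_eq_right_inv
  rw [tMat, tMat, iotaBlk, iotaBlk, Matrix.fromBlocks_multiply]
  simp [Matrix.smul_mul, Matrix.mul_smul, smul_smul, mul_inv_cancel₀ ha, inv_mul_cancel₀ ha,
    one_smul, ← Matrix.fromBlocks_one]

lemma TT' {n : ℕ} {F : Type*} [Field F] (p : F) (hp : p ≠ 0) :
    (Matrix.fromBlocks (p • 1) 0 0 1 : Matrix (Fin n ⊕ Fin n) (Fin n ⊕ Fin n) F) *
      Matrix.fromBlocks (p⁻¹ • 1) 0 0 1 = 1 := by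
  rw [Matrix.fromBlocks_multiply]
  simp [Matrix.smul_mul, Matrix.mul_smul, smul_smul, mul_inv_cancel₀ hp, inv_mul_cancel₀ hp,
    one_smul, ← Matrix.fromBlocks_one]

lemma xi_mul_xiInv (n : ℕ) (R : Type*) [CommRing R] : xiMat n R * xiInvMat n R = 1 := by
  rw [xiMat, xiInvMat, Matrix.fromBlocks_multiply]
  simp [w_mul_w, ← Matrix.fromBlocks_one]

lemma xiInv_mul_xi (n : ℕ) (R : Type*) [CommRing R] : xiInvMat n R * xiMat n R = 1 := by
  rw [xiMat, xiInvMat, Matrix.fromBlocks_multiply]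
  simp [w_mul_w, ← Matrix.fromBlocks_one]

lemma conj_iff {m : Type*} [Fintype m] [DecidableEq m] {F : Type*} [CommRing F]
    (a b g k : Matrix m m F) (hab : a * b = 1) (hba : b * a = 1) :
    g = a * k * b ↔ k = b * g * a := by
  constructor
  · rintro rfl
    rw [show b * (a * k * b) * a = (b * a) * k * (b * a) by noncomm_ring, hba, one_mul, mul_one]
  · rintro rfl
    rw [show a * (b * g * a) * b = (a * b) * g * (a * b) by noncomm_ring, hab, one_mul, mul_one]

lemma Mcomp {n : ℕ} {F : Type*} [Field F] (p : F) (hp : p ≠ 0)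
    (H₁ H₂ : Matrix (Fin n) (Fin n) F) :
    (Matrix.fromBlocks (p⁻¹ • 1) 0 0 1 * xiInvMat n F) * iotaBlk H₁ H₂ *
      (xiMat n F * Matrix.fromBlocks (p • 1) 0 0 1) =
    Matrix.fromBlocks H₁ (p⁻¹ • ((H₁ - H₂) * wMat n F)) 0 (wMat n F * H₂ * wMat n F) := by
  rw [xiInvMat, xiMat, iotaBlk, Matrix.fromBlocks_multiply, Matrix.fromBlocks_multiply,
    Matrix.fromBlocks_multiply, Matrix.fromBlocks_multiply]
  simp [Matrix.smul_mul, Matrix.mul_smul, smul_smul, inv_mul_cancel₀ hp, mul_inv_cancel₀ hp,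
    sub_mul, smul_sub, sub_eq_add_neg, add_mul, neg_mul, smul_add, smul_neg, mul_assoc]

/-- For a subgroup `K` of `GL_{2n}(O)` containing all the matrices `[[1, X], [0, 1]]`,
`X ∈ M_n(O)`, and for `h₁, h₂ ∈ GL_n(O)`, one has
`ι(h₁,h₂) ∈ K ∩ ξ t^β K t^{-β} ξ⁻¹` if and only if
`ι(h₁,h₂) ∈ K ∩ ι(1,w_n) K ι(1,w_n)` and `h₁ - h₂ ∈ ϖ^β M_n(O)`. -/
theorem statement4 (n : ℕ) (hn : 1 ≤ n)
    (O : Type*) [CommRing O] [IsDomain O] [IsDiscreteValuationRing O]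
    (F : Type*) [Field F] [Algebra O F] [IsFractionRing O F]
    (ϖ : O) (hϖ : Irreducible ϖ) (β : ℕ)
    (K : Set (Matrix (Fin n ⊕ Fin n) (Fin n ⊕ Fin n) F))
    (hK1 : (1 : Matrix (Fin n ⊕ Fin n) (Fin n ⊕ Fin n) F) ∈ K)
    (hKmul : ∀ a ∈ K, ∀ b ∈ K, a * b ∈ K)
    (hKinv : ∀ a ∈ K, ∃ b ∈ K, a * b = 1 ∧ b * a = 1)
    (hKO : ∀ g ∈ K, ∀ i j, g i j ∈ (algebraMap O F).range)
    (hKU : ∀ X : Matrix (Fin n) (Fin n) O,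
      Matrix.fromBlocks 1 (X.map (algebraMap O F)) 0 1 ∈ K)
    (h₁ h₂ : Matrix (Fin n) (Fin n) O) (hu₁ : IsUnit h₁) (hu₂ : IsUnit h₂) :
    (iotaBlk (h₁.map (algebraMap O F)) (h₂.map (algebraMap O F)) ∈ K ∧
      (∃ k ∈ K, iotaBlk (h₁.map (algebraMap O F)) (h₂.map (algebraMap O F)) =
        xiMat n F * tMat n F (algebraMap O F ϖ) ^ β * k *
          tMat n F (algebraMap O F ϖ)⁻¹ ^ β * xiInvMat n F))
    ↔
    (iotaBlk (h₁.map (algebraMap O F)) (h₂.map (algebraMap O F)) ∈ K ∧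
      (∃ k ∈ K, iotaBlk (h₁.map (algebraMap O F)) (h₂.map (algebraMap O F)) =
        iotaBlk 1 (wMat n F) * k * iotaBlk 1 (wMat n F)) ∧
      ∀ i j : Fin n, h₁ i j - h₂ i j ∈ Ideal.span {ϖ ^ β}) := by
  have hinj : Function.Injective (algebraMap O F) := IsFractionRing.injective O F
  set φ := algebraMap O F with hφ
  obtain ⟨h₂inv, hh₂1, hh₂2⟩ : ∃ c, h₂ * c = 1 ∧ c * h₂ = 1 := by
    obtain ⟨u, hu⟩ := hu₂
    exact ⟨↑u⁻¹, by simp [← hu], by simp [← hu]⟩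
  set wF := wMat n F with hwF
  set H₁ := h₁.map φ with hH₁
  set H₂ := h₂.map φ with hH₂
  set g := iotaBlk H₁ H₂ with hg
  have hϖ0 : φ ϖ ≠ 0 := fun h => hϖ.ne_zero (hinj (by simpa using h))
  set p := φ ϖ ^ β with hpdef
  have hp0 : p ≠ 0 := pow_ne_zero _ hϖ0
  -- the conjugated matrix
  set Mx : Matrix (Fin n ⊕ Fin n) (Fin n ⊕ Fin n) F :=
    Matrix.fromBlocks H₁ (p⁻¹ • ((H₁ - H₂) * wF)) 0 (wF * H₂ * wF) with hMx
  set N : Matrix (Fin n ⊕ Fin n) (Fin n ⊕ Fin n) F :=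
    Matrix.fromBlocks H₁ 0 0 (wF * H₂ * wF) with hN
  set J := iotaBlk (1 : Matrix (Fin n) (Fin n) F) wF with hJ
  -- basic invertibility facts
  set T : Matrix (Fin n ⊕ Fin n) (Fin n ⊕ Fin n) F := Matrix.fromBlocks (p • 1) 0 0 1 with hT
  set T' : Matrix (Fin n ⊕ Fin n) (Fin n ⊕ Fin n) F := Matrix.fromBlocks (p⁻¹ • 1) 0 0 1 with hT'
  have hTT' : T * T' = 1 := TT' p hp0
  have hT'T : T' * T = 1 := by
    have h := TT' (n := n) (F := F) p⁻¹ (inv_ne_zero hp0)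
    rwa [inv_inv] at h
  have hab : (xiMat n F * T) * (T' * xiInvMat n F) = 1 := by
    rw [show (xiMat n F * T) * (T' * xiInvMat n F)
        = xiMat n F * (T * T') * xiInvMat n F by noncomm_ring, hTT', mul_one, xi_mul_xiInv]
  have hba : (T' * xiInvMat n F) * (xiMat n F * T) = 1 := by
    rw [show (T' * xiInvMat n F) * (xiMat n F * T)
        = T' * (xiInvMat n F * xiMat n F) * T by noncomm_ring, xiInv_mul_xi, mul_one, hT'T]
  have hconj : ∀ k, (g = xiMat n F * tMat n F (φ ϖ) ^ β * k *
      tMat n F (φ ϖ)⁻¹ ^ β * xiInvMat n F) ↔ k = Mx := by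
    intro k
    rw [tMat_pow, tMat_pow, inv_pow, ← hpdef, ← hT, ← hT']
    rw [show xiMat n F * T * k * T' * xiInvMat n F
        = (xiMat n F * T) * k * (T' * xiInvMat n F) by noncomm_ring]
    rw [conj_iff _ _ _ _ hab hba]
    have hM : T' * xiInvMat n F * g * (xiMat n F * T) = Mx := Mcomp p hp0 H₁ H₂
    rw [hM]
  have hww : wF * wF = 1 := w_mul_w
  have hJJ : J * J = 1 := by
    rw [hJ, iotaBlk, Matrix.fromBlocks_multiply]
    simp [hww, ← Matrix.fromBlocks_one]
  have hJgJ : J * g * J = N := by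
    rw [hJ, hg, hN, iotaBlk, iotaBlk, Matrix.fromBlocks_multiply, Matrix.fromBlocks_multiply]
    simp
  have hJiff : ∀ k, (g = J * k * J) ↔ k = N := by
    intro k
    rw [conj_iff _ _ _ _ hJJ hJJ, hJgJ]
  -- extraction of the congruence condition from membership of Mx
  have hspan_of : Mx ∈ K → ∀ i j : Fin n, h₁ i j - h₂ i j ∈ Ideal.span {ϖ ^ β} := by
    intro hMK i j
    obtain ⟨y, hy⟩ := hKO Mx hMK (Sum.inl i) (Sum.inr j.rev)
    rw [Ideal.mem_span_singleton]
    refine ⟨y, hinj ?_⟩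
    have he : Mx (Sum.inl i) (Sum.inr j.rev) = p⁻¹ * φ (h₁ i j - h₂ i j) := by
      rw [hMx, Matrix.fromBlocks_apply₁₂, Matrix.smul_apply, smul_eq_mul,
        mul_w_apply (H₁ - H₂) i j.rev, Fin.rev_rev]
      rw [Matrix.sub_apply, hH₁, hH₂, Matrix.map_apply, Matrix.map_apply, ← map_sub]
    rw [he] at hy
    calc φ (h₁ i j - h₂ i j) = p * (p⁻¹ * φ (h₁ i j - h₂ i j)) := by
          rw [← mul_assoc, mul_inv_cancel₀ hp0, one_mul]
      _ = p * φ y := by rw [hy]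
      _ = φ (ϖ ^ β * y) := by rw [_root_.map_mul, map_pow, hpdef]
  -- the key equivalence, assuming the congruence condition
  have hDkey : (∀ i j : Fin n, h₁ i j - h₂ i j ∈ Ideal.span {ϖ ^ β}) → (Mx ∈ K ↔ N ∈ K) := by
    intro hspan
    choose D₀ hD using fun i j => Ideal.mem_span_singleton.mp (hspan i j)
    set D : Matrix (Fin n) (Fin n) O := Matrix.of D₀ with hDdef
    have hHD : H₁ - H₂ = p • (D.map φ) := by
      ext i j
      rw [Matrix.sub_apply, Matrix.smul_apply, smul_eq_mul, hH₁, hH₂, Matrix.map_apply,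
        Matrix.map_apply, Matrix.map_apply, ← map_sub, hD i j, _root_.map_mul, map_pow,
        ← hpdef, hDdef, Matrix.of_apply]
    have hMx2 : Mx = Matrix.fromBlocks H₁ (D.map φ * wF) 0 (wF * H₂ * wF) := by
      rw [hMx, hHD, Matrix.smul_mul, smul_smul, inv_mul_cancel₀ hp0, one_smul]
    set E : Matrix (Fin n) (Fin n) O := D * h₂inv * wMat n O with hE
    have hEmap : E.map φ = D.map φ * (h₂inv.map φ * wF) := by
      rw [hE, Matrix.map_mul, Matrix.map_mul, wMat_map φ, ← hwF, mul_assoc]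
    have hh2F : h₂inv.map φ * H₂ = 1 := by
      rw [hH₂, ← Matrix.map_mul, hh₂2]
      exact Matrix.map_one _ (map_zero φ) (map_one φ)
    have hcalc : E.map φ * (wF * H₂ * wF) = D.map φ * wF := by
      rw [hEmap]
      rw [show D.map φ * (h₂inv.map φ * wF) * (wF * H₂ * wF)
          = D.map φ * ((h₂inv.map φ * ((wF * wF) * H₂)) * wF) by noncomm_ring]
      rw [hww, one_mul, hh2F, one_mul]
    have hU : Matrix.fromBlocks 1 (E.map φ) 0 1 ∈ K := hKU E
    have hU' : Matrix.fromBlocks 1 (-(E.map φ)) 0 1 ∈ K := by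
      have h := hKU (-E)
      rwa [show (-E).map ⇑φ = -(E.map ⇑φ) by ext i j; simp [Matrix.map_apply]] at h
    have hUN : Matrix.fromBlocks 1 (E.map φ) 0 1 * N = Mx := by
      rw [hN, hMx2, Matrix.fromBlocks_multiply]
      simp only [Matrix.one_mul, Matrix.mul_zero, Matrix.zero_mul, Matrix.mul_one,
        add_zero, zero_add]
      rw [hcalc]
    have hU'Mx : Matrix.fromBlocks 1 (-(E.map φ)) 0 1 * Mx = N := by
      rw [← hUN, ← mul_assoc, Matrix.fromBlocks_multiply]
      simp [Matrix.fromBlocks_one]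
    constructor
    · intro h
      rw [← hU'Mx]
      exact hKmul _ hU' _ h
    · intro h
      rw [← hUN]
      exact hKmul _ hU _ h
  constructor
  · rintro ⟨hgK, k, hkK, hk⟩
    rw [hconj k] at hk
    subst hk
    have hspan := hspan_of hkK
    exact ⟨hgK, ⟨N, (hDkey hspan).mp hkK, (hJiff N).mpr rfl⟩, hspan⟩
  · rintro ⟨hgK, ⟨k', hk'K, hk'⟩, hspan⟩
    rw [hJiff k'] at hk'
    subst hk'
    exact ⟨hgK, Mx, (hDkey hspan).mpr hk'K, (hconj Mx).mpr rfl⟩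
end

section
/- Let n ≥ 1 and β ≥ 0 be integers, and let W : GL_{2n}(F) → ℂ satisfy: W(g·[[1_n,X],[0,1_n]]) = W(g) for all X ∈ M_n(O) and g ∈ GL_{2n}(F), and W([[1_n,Y],[0,1_n]]·g) = ψ(tr Y)·W(g) for all Y ∈ M_n(F) and g ∈ GL_{2n}(F). Then for every h ∈ GL_n(F) with h ∉ ϖ^{−β−δ}M_n(O), one has W(ι(h,1_n)·ξ·t^β) = 0. (The zeta integrand is supported on GL_n(F) ∩ ϖ^{−β−δ}M_n(O).) -/
open Matrix

lemma wMat_mul_wMat (n : ℕ) (R : Type*) [CommRing R] : wMat n R * wMat n R = 1 := by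
  ext i j
  simp only [wMat, Matrix.mul_apply, Matrix.one_apply, ite_mul, one_mul, zero_mul]
  rw [Finset.sum_eq_single i.rev]
  · have h1 := i.isLt; have h2 := j.isLt
    have hrev := Fin.val_rev i
    by_cases hij : i = j
    · subst hij
      rw [if_pos (by omega), if_pos (by omega), if_pos rfl]
    · have hne : ¬ ((i.rev : ℕ) + (j : ℕ) + 1 = n) := by
        intro hh; apply hij; exact Fin.val_injective (by omega)
      rw [if_pos (by omega), if_neg hne, if_neg hij]
  · intro b _ hb
    have hrev := Fin.val_rev i
    have h1 := i.isLt
    have : ¬ ((i : ℕ) + (b : ℕ) + 1 = n) := by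
      intro hh; apply hb; apply Fin.val_injective
      have hb1 := b.isLt; omega
    rw [if_neg this]
  · simp

lemma trace_mul_std {n : ℕ} {R : Type*} [CommRing R] (M N : Matrix (Fin n) (Fin n) R)
    (a b : Fin n) (c : R) :
    (M * Matrix.single a b c * N).trace = c * (N * M) b a := by
  simp only [Matrix.trace, Matrix.diag, Matrix.mul_apply, Matrix.single,
    Matrix.of_apply, ite_and, Finset.mul_sum, Finset.sum_mul, mul_ite, ite_mul,
    mul_zero, zero_mul, mul_one, Finset.sum_ite_eq, Finset.sum_ite_eq',
    Finset.mem_univ, if_true]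
  exact Finset.sum_congr rfl fun k _ => by ring

lemma tpow (n : ℕ) (F : Type*) [CommRing F] (a : F) (β : ℕ) :
    (Matrix.fromBlocks (a • (1 : Matrix (Fin n) (Fin n) F)) 0 0
      (1 : Matrix (Fin n) (Fin n) F)) ^ β
      = Matrix.fromBlocks ((a ^ β) • (1 : Matrix (Fin n) (Fin n) F)) 0 0 1 := by
  induction β with
  | zero => simp [Matrix.fromBlocks_one]
  | succ k ih =>
    rw [pow_succ, ih, Matrix.fromBlocks_multiply]
    simp [pow_succ, smul_smul, mul_comm]

/-- Support of the zeta integrand: if `W` is right-invariant under `[[1,X],[0,1]]`,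
`X ∈ M_n(O)`, and transforms by `ψ(tr Y)` under left translation by `[[1,Y],[0,1]]`,
`Y ∈ M_n(F)`, then `W(ι(h,1)·ξ·t^β)` vanishes for `h ∈ GL_n(F)` with
`h ∉ ϖ^{-β-δ} M_n(O)`. Here `F` is a p-adic-like field: a field with normalized valuation
`v`, valuation ring `O` and uniformizer `ϖ`; `ψ` is an additive character trivial on
`ϖ^{-δ}O` but not on `ϖ^{-δ-1}O`. -/
theorem statement9
    (F : Type*) [Field F] (O : Subring F) (ϖ : F) (hϖO : ϖ ∈ O) (hϖ0 : ϖ ≠ 0)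
    (v : F → ℤ)
    (hv_mul : ∀ x y : F, x ≠ 0 → y ≠ 0 → v (x * y) = v x + v y)
    (hv_ϖ : v ϖ = 1)
    (hv_O : ∀ x : F, x ≠ 0 → (x ∈ O ↔ 0 ≤ v x))
    (δ : ℤ) (ψ : F → ℂ)
    (hψ_add : ∀ x y : F, ψ (x + y) = ψ x * ψ y)
    (hψ_triv : ∀ x : F, ϖ ^ δ * x ∈ O → ψ x = 1)
    (hψ_nontriv : ∃ x : F, ϖ ^ (δ + 1) * x ∈ O ∧ ψ x ≠ 1)
    (n : ℕ) (hn : 1 ≤ n) (β : ℕ)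
    (W : Matrix (Fin n ⊕ Fin n) (Fin n ⊕ Fin n) F → ℂ)
    (hWright : ∀ X : Matrix (Fin n) (Fin n) F, (∀ i j, X i j ∈ O) →
      ∀ g, W (g * Matrix.fromBlocks 1 X 0 1) = W g)
    (hWleft : ∀ (Y : Matrix (Fin n) (Fin n) F) (g),
      W (Matrix.fromBlocks 1 Y 0 1 * g) = ψ Y.trace * W g)
    (h : Matrix (Fin n) (Fin n) F) (hh : IsUnit h)
    (hsupp : ¬ ∀ i j : Fin n, ϖ ^ ((β : ℤ) + δ) * h i j ∈ O) :
    W (iotaBlk h 1 * xiMat n F * tMat n F ϖ ^ β) = 0 := by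
  classical
  -- elementary valuation facts
  have hψ0 : ψ 0 = 1 := hψ_triv 0 (by simpa using O.zero_mem)
  have hv1 : v 1 = 0 := by
    have := hv_mul 1 1 one_ne_zero one_ne_zero
    simp at this; omega
  have hvinv : ∀ x : F, x ≠ 0 → v x⁻¹ = - v x := by
    intro x hx
    have := hv_mul x x⁻¹ hx (inv_ne_zero hx)
    rw [mul_inv_cancel₀ hx, hv1] at this; omega
  have hvzpow : ∀ m : ℤ, v ((ϖ : F) ^ m) = m := by
    intro m
    induction m using Int.induction_on with
    | zero => simpa using hv1
    | succ k ih =>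
        rw [zpow_add_one₀ hϖ0, hv_mul _ _ (zpow_ne_zero _ hϖ0) hϖ0, ih, hv_ϖ]
    | pred k ih =>
        rw [zpow_sub_one₀ hϖ0, hv_mul _ _ (zpow_ne_zero _ hϖ0) (inv_ne_zero hϖ0),
          ih, hvinv ϖ hϖ0, hv_ϖ]
        ring
  push_neg at hsupp
  obtain ⟨i, j, hij⟩ := hsupp
  have hhij : h i j ≠ 0 := by
    intro h0; exact hij (by rw [h0, mul_zero]; exact O.zero_mem)
  obtain ⟨x, hx1, hx2⟩ := hψ_nontriv
  have hx0 : x ≠ 0 := fun h0 => hx2 (h0 ▸ hψ0)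
  have hvx : -(δ + 1) ≤ v x := by
    have hne : ϖ ^ (δ + 1) * x ≠ 0 := mul_ne_zero (zpow_ne_zero _ hϖ0) hx0
    have := (hv_O _ hne).mp hx1
    rw [hv_mul _ _ (zpow_ne_zero _ hϖ0) hx0, hvzpow] at this; omega
  have hvh : v (h i j) < -(β : ℤ) - δ := by
    have hne : ϖ ^ ((β : ℤ) + δ) * h i j ≠ 0 := mul_ne_zero (zpow_ne_zero _ hϖ0) hhij
    by_contra hc
    exact hij ((hv_O _ hne).mpr
      (by rw [hv_mul _ _ (zpow_ne_zero _ hϖ0) hhij, hvzpow]; omega))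
  have hvpowβ : v ((ϖ : F) ^ β) = (β : ℤ) := by rw [← zpow_natCast]; exact hvzpow β
  set a : F := ϖ ^ β * h i j with ha
  have ha0 : a ≠ 0 := mul_ne_zero (pow_ne_zero _ hϖ0) hhij
  have hva : v a ≤ -δ - 1 := by
    rw [ha, hv_mul _ _ (pow_ne_zero _ hϖ0) hhij, hvpowβ]; omega
  set c : F := x / a with hc
  have hc0 : c ≠ 0 := div_ne_zero hx0 ha0
  have hcO : c ∈ O := by
    rw [hv_O c hc0, hc, div_eq_mul_inv, hv_mul _ _ hx0 (inv_ne_zero ha0), hvinv a ha0]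
    omega
  have hkey : ψ (ϖ ^ β * (c * h i j)) ≠ 1 := by
    have hx : ϖ ^ β * (c * h i j) = x := by
      rw [hc, ha]; field_simp
    rw [hx]; exact hx2
  -- matrix computation
  set w : Matrix (Fin n) (Fin n) F := wMat n F with hw
  have hww : w * w = 1 := wMat_mul_wMat n F
  have htM : tMat n F ϖ = Matrix.fromBlocks (ϖ • (1 : Matrix (Fin n) (Fin n) F)) 0 0 1 := rfl
  have hg : iotaBlk h 1 * xiMat n F * tMat n F ϖ ^ β
      = Matrix.fromBlocks ((ϖ ^ β : F) • h) (h * w) 0 w := by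
    rw [htM, tpow]
    show Matrix.fromBlocks h 0 0 1 * Matrix.fromBlocks 1 w 0 w * _ = _
    rw [Matrix.fromBlocks_multiply, Matrix.fromBlocks_multiply]
    simp [mul_smul_comm]
  set X : Matrix (Fin n) (Fin n) F := Matrix.single j i.rev c with hX
  have hXO : ∀ p q, X p q ∈ O := by
    intro p q
    simp only [hX, Matrix.single, Matrix.of_apply]
    split_ifs
    exacts [hcO, O.zero_mem]
  set Y : Matrix (Fin n) (Fin n) F := (ϖ ^ β : F) • (h * X * w) with hY
  have hconj : (Matrix.fromBlocks ((ϖ ^ β : F) • h) (h * w) 0 w) * Matrix.fromBlocks 1 X 0 1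
      = Matrix.fromBlocks 1 Y 0 1 * Matrix.fromBlocks ((ϖ ^ β : F) • h) (h * w) 0 w := by
    rw [Matrix.fromBlocks_multiply, Matrix.fromBlocks_multiply, hY]
    simp [Matrix.smul_mul, Matrix.mul_assoc, hww, add_comm]
  have htr : Y.trace = ϖ ^ β * (c * h i j) := by
    have hwh : (w * h) i.rev j = h i j := by
      rw [Matrix.mul_apply, Finset.sum_eq_single i]
      · have := Fin.val_rev i
        have := i.isLt
        rw [hw]; show (if (i.rev : ℕ) + (i : ℕ) + 1 = n then (1:F) else 0) * h i j = h i j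
        rw [if_pos (by omega), one_mul]
      · intro b _ hb
        have := Fin.val_rev i
        have := i.isLt
        have hb1 := b.isLt
        have hne : ¬ ((i.rev : ℕ) + (b : ℕ) + 1 = n) := by
          intro hh; exact hb (Fin.val_injective (by omega))
        rw [hw]; show (if (i.rev : ℕ) + (b : ℕ) + 1 = n then (1:F) else 0) * h b j = 0
        rw [if_neg hne, zero_mul]
      · simp
    rw [hY, Matrix.trace_smul, hX, trace_mul_std, smul_eq_mul, hwh]
  have hstep : W (iotaBlk h 1 * xiMat n F * tMat n F ϖ ^ β)
      = ψ Y.trace * W (iotaBlk h 1 * xiMat n F * tMat n F ϖ ^ β) := by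
    conv_lhs => rw [← hWright X hXO (iotaBlk h 1 * xiMat n F * tMat n F ϖ ^ β)]
    rw [hg, hconj, ← hg, hWleft]
  have hne1 : ψ Y.trace ≠ 1 := by rw [htr]; exact hkey
  have h0 : (1 - ψ Y.trace) * W (iotaBlk h 1 * xiMat n F * tMat n F ϖ ^ β) = 0 := by
    rw [sub_mul, one_mul, ← hstep, sub_self]
  rcases mul_eq_zero.mp h0 with hcase | hcase
  · exact absurd (sub_eq_zero.mp hcase).symm hne1
  · exact hcase
end
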